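/- Let n ≥ 5, q > 1, and let I, J be a bipartition of Z_q. The cross-bifix-free code S_{I,J}^{(k)}(n) is non-expandable if and only if k = n-1 or 1 ≤ k < n/2. -/

import Mathlib

open List

/-- A code (set of words) is cross-bifix-free: no proper nonempty prefix of a
codeword equals a proper nonempty suffix of a codeword. -/
def IsCBF {α : Type*} (C : Set (List α)) : Prop :=
  ∀ u ∈ C, ∀ v ∈ C, ∀ w : List α, w ≠ [] → w.length < u.length → w.length < v.length →
    ¬ (w <+: u ∧ w <:+ v)

/-- A word is bifix-free: no proper nonempty prefix equals a proper nonempty suffix. -/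
def BifixFree {α : Type*} (u : List α) : Prop :=
  ∀ w : List α, w ≠ [] → w.length < u.length → w <+: u → ¬ w <:+ u

/-- `w` is `I^k`-free: no `k` consecutive coordinates of `w` all lie in `I`. -/
def IkFree {α : Type*} (I : Set α) (k : ℕ) (w : List α) : Prop :=
  ¬ ∃ y : List α, y <:+: w ∧ y.length = k ∧ ∀ x ∈ y, x ∈ I

/-- The code `S_{I,J}^{(k)}(n)`: words of length `n` whose first `k` coordinates lie
in `I`, whose `(k+1)`-th and `n`-th coordinates lie in `J`, and whose subword from
position `k+2` to `n-1` (1-indexed) is `I^k`-free. -/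
def Sijk {q : ℕ} (I J : Set (Fin q)) (k n : ℕ) : Set (List (Fin q)) :=
  {w | w.length = n ∧ (∀ x ∈ w.take k, x ∈ I) ∧ (∃ a ∈ J, w[k]? = some a) ∧
       (∃ a ∈ J, w[n-1]? = some a) ∧ IkFree I k ((w.drop (k+1)).take (n - k - 2))}

section helpers

variable {q n k : ℕ} {I J : Set (Fin q)}

lemma gic {α : Type*} {l : List α} {a b : ℕ} (hab : a = b) {h : a < l.length} :
    l[a] = l[b]'(hab ▸ h) := by subst hab; rfl

lemma glc {α : Type*} {l l' : List α} (h : l = l') {i : ℕ} {hi : i < l.length} :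
    l[i] = l'[i]'(h ▸ hi) := by subst h; rfl

lemma suffix_getElem {α : Type*} {w v : List α} (h : w <:+ v) {t p : ℕ}
    (ht : t < w.length) (hp : v.length - w.length + t = p) (hpv : p < v.length) :
    w[t] = v[p] := by subst hp; exact h.getElem ht

lemma memJ (hIJ : I ∪ J = Set.univ) {a : Fin q} (h : a ∉ I) : a ∈ J := by
  have h2 : a ∈ I ∪ J := hIJ ▸ Set.mem_univ a
  rcases h2 with h2 | h2
  · exact absurd h2 h
  · exact h2

lemma memI (hIJ : I ∪ J = Set.univ) {a : Fin q} (h : a ∉ J) : a ∈ I := by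
  have h2 : a ∈ I ∪ J := hIJ ▸ Set.mem_univ a
  rcases h2 with h2 | h2
  · exact h2
  · exact absurd h2 h

lemma notboth (hd : I ∩ J = ∅) {a : Fin q} (h1 : a ∈ I) (h2 : a ∈ J) : False := by
  have : a ∈ I ∩ J := ⟨h1, h2⟩
  simp [hd] at this

lemma ikfree_of (hd : I ∩ J = ∅) {L : List (Fin q)}
    (h : ∀ a, a + k ≤ L.length → ∃ t, t < k ∧ ∃ (hh : a + t < L.length), L[a+t] ∈ J) :
    IkFree I k L := by
  rintro ⟨y, ⟨s, t, rfl⟩, hlen, hmem⟩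
  have hsb : s.length + k ≤ (s ++ y ++ t).length := by simp; omega
  obtain ⟨t', ht', hb, hJ⟩ := h s.length hsb
  have hb' : s.length + t' < (s ++ y).length := by simp; omega
  have hy : y[t']'(by omega) ∈ J := by
    have he : (s ++ y ++ t)[s.length + t']'hb = y[t']'(by omega) := by
      rw [List.getElem_append_left hb', List.getElem_append_right (by omega)]
      exact gic (by omega)
    rwa [he] at hJ
  exact notboth hd (hmem _ (List.getElem_mem _)) hy

lemma mem_Sijk (hd : I ∩ J = ∅) (hk1 : 1 ≤ k) (hkn : k ≤ n - 1) (hn5 : 5 ≤ n)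
    {w : List (Fin q)} (hlen : w.length = n)
    (h1 : ∀ t (h : t < w.length), t < k → w[t] ∈ I)
    (h2 : ∀ (h : k < w.length), w[k] ∈ J)
    (h3 : ∀ (h : n - 1 < w.length), w[n-1] ∈ J)
    (h4 : ∀ a, a + k ≤ n - k - 2 → ∃ t, t < k ∧
        ∀ (h : k+1+(a+t) < w.length), w[k+1+(a+t)] ∈ J) :
    w ∈ Sijk I J k n := by
  refine ⟨hlen, ?_, ?_, ?_, ?_⟩
  · intro x hx
    obtain ⟨t, ht, rfl⟩ := List.mem_iff_getElem.1 hx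
    rw [List.getElem_take]
    exact h1 t (by simp at ht; omega) (by simp [List.length_take] at ht; omega)
  · exact ⟨w[k]'(by omega), h2 _, List.getElem?_eq_getElem _⟩
  · exact ⟨w[n-1]'(by omega), h3 _, List.getElem?_eq_getElem _⟩
  · apply ikfree_of hd
    intro a ha
    simp only [List.length_take, List.length_drop, hlen] at ha ⊢
    obtain ⟨t, ht, hJ⟩ := h4 a (by omega)
    refine ⟨t, ht, by omega, ?_⟩
    rw [List.getElem_take, List.getElem_drop]
    exact hJ _

lemma S_len {w : List (Fin q)} (hw : w ∈ Sijk I J k n) : w.length = n := hw.1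

lemma S_first {w : List (Fin q)} (hw : w ∈ Sijk I J k n) {t : ℕ}
    (h : t < w.length) (htk : t < k) : w[t] ∈ I := by
  apply hw.2.1
  exact List.mem_iff_getElem.2 ⟨t, by simp [List.length_take]; omega, List.getElem_take⟩

lemma S_k {w : List (Fin q)} (hw : w ∈ Sijk I J k n) (h : k < w.length) : w[k] ∈ J := by
  obtain ⟨a, ha, he⟩ := hw.2.2.1
  rw [List.getElem?_eq_getElem h] at he
  rwa [Option.some_inj.1 he]

lemma S_last {w : List (Fin q)} (hw : w ∈ Sijk I J k n) (h : n - 1 < w.length) :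
    w[n-1] ∈ J := by
  obtain ⟨a, ha, he⟩ := hw.2.2.2.1
  rw [List.getElem?_eq_getElem h] at he
  rwa [Option.some_inj.1 he]

lemma S_norun (hd : I ∩ J = ∅) (hk1 : 1 ≤ k) {w : List (Fin q)}
    (hw : w ∈ Sijk I J k n) {p : ℕ} (hp1 : 1 ≤ p) (hpk : p + k ≤ n)
    (hrun : ∀ t, t < k → ∀ (h : p + t < w.length), w[p+t] ∈ I) : False := by
  have hlen := S_len hw
  rcases le_or_gt p k with hpk' | hpk'
  · -- position k is inside the run
    have h1 : w[p + (k - p)]'(by omega) ∈ I := hrun (k-p) (by omega) (by omega)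
    rw [gic (show p + (k - p) = k by omega)] at h1
    exact notboth hd h1 (S_k hw (by omega))
  rcases eq_or_lt_of_le hpk with he | hlt
  · -- run touches last position
    have h1 : w[p + (k - 1)]'(by omega) ∈ I := hrun (k-1) (by omega) (by omega)
    rw [gic (show p + (k - 1) = n - 1 by omega)] at h1
    exact notboth hd h1 (S_last hw (by omega))
  · -- run inside the middle: contradicts IkFree
    apply hw.2.2.2.2
    refine ⟨(((w.drop (k+1)).take (n - k - 2)).drop (p - k - 1)).take k,
      ((List.take_prefix _ _).isInfix).trans ((List.drop_suffix _ _).isInfix), ?_, ?_⟩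
    · simp [List.length_take, List.length_drop, hlen]; omega
    · intro z hz
      obtain ⟨t, ht, rfl⟩ := List.mem_iff_getElem.1 hz
      have htk : t < k := by
        simp [List.length_take, List.length_drop, hlen] at ht; omega
      have he : ((((w.drop (k+1)).take (n - k - 2)).drop (p - k - 1)).take k)[t]'ht
          = w[p + t]'(by omega) := by
        simp only [List.getElem_take, List.getElem_drop]
        exact gic (by omega)
      rw [he]
      exact hrun t htk (by omega)

theorem S_CBF (hd : I ∩ J = ∅) (hk1 : 1 ≤ k) : IsCBF (Sijk I J k n) := by
  rintro u hu v hv w hne hwu hwv ⟨hp, hs⟩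
  have hℓ : 1 ≤ w.length := List.length_pos_iff.2 hne
  have hun := S_len hu
  have hvn := S_len hv
  have hlast : w[w.length - 1]'(by omega) ∈ J := by
    rw [suffix_getElem hs (by omega) (show v.length - w.length + (w.length - 1) = n - 1 by omega)
      (by omega)]
    exact S_last hv (by omega)
  rcases le_or_gt w.length k with hk | hk
  · have : w[w.length - 1]'(by omega) ∈ I := by
      rw [hp.getElem (by omega)]
      exact S_first hu (by omega) (by omega)
    exact notboth hd this hlast
  · apply S_norun hd hk1 hv (p := n - w.length) (by omega) (by omega)
    intro t ht hb
    have h1 : w[t]'(by omega) = v[n - w.length + t]'hb := by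
      exact suffix_getElem hs (by omega) (by omega) hb
    rw [← h1, hp.getElem (by omega)]
    exact S_first hu (by omega) ht



variable {q n k : ℕ} {I J : Set (Fin q)}

lemma nonexp (hn : 5 ≤ n) (hk1 : 1 ≤ k) (hk2 : k ≤ n - 1)
    (hIJ : I ∪ J = Set.univ) (hd : I ∩ J = ∅) (hI : I.Nonempty) (hJ : J.Nonempty)
    (hk : k = n - 1 ∨ 2 * k < n)
    (x : List (Fin q)) (hxlen : x.length = n) (hxS : x ∉ Sijk I J k n) :
    ¬ IsCBF (Sijk I J k n ∪ {x}) := by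
  classical
  intro hCBF
  obtain ⟨i, hi⟩ := hI
  obtain ⟨j, hj⟩ := hJ
  by_cases hA : x[n-1]'(by omega) ∈ I
  · -- Case A : last symbol of x in I
    set a := x[n-1]'(by omega) with ha
    set u : List (Fin q) := a :: (replicate (k-1) i ++ replicate (n-k) j) with hu
    have hulen : u.length = n := by simp [hu]; omega
    have hublock : ∀ p (h : p < n - 1), (replicate (k-1) i ++ replicate (n-k) j)[p]'(by simp; omega)
        = if p < k - 1 then i else j := by
      intro p h
      by_cases hp : p < k - 1
      · rw [List.getElem_append_left (by simp; omega), List.getElem_replicate, if_pos hp]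
      · rw [List.getElem_append_right (by simp; omega), List.getElem_replicate, if_neg hp]
    have huS : u ∈ Sijk I J k n := by
      apply mem_Sijk hd hk1 hk2 hn hulen
      · intro t h htk
        rcases t with _ | t
        · simpa [hu] using hA
        · simp only [hu, List.getElem_cons_succ]
          rw [hublock t (by omega), if_pos (by omega)]
          exact hi
      · intro h
        rw [gic (show k = (k-1) + 1 by omega)]
        simp only [hu, List.getElem_cons_succ]
        rw [hublock (k-1) (by omega), if_neg (by omega)]
        exact hj
      · intro h
        rw [gic (show n - 1 = (n-2) + 1 by omega)]
        simp only [hu, List.getElem_cons_succ]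
        rw [hublock (n-2) (by omega), if_neg (by omega)]
        exact hj
      · intro b hb
        refine ⟨0, by omega, fun h => ?_⟩
        rw [gic (show k+1+(b+0) = (k+b) + 1 by omega)]
        simp only [hu, List.getElem_cons_succ]
        rw [hublock (k+b) (by omega), if_neg (by omega)]
        exact hj
    have hdrop : x.drop (n-1) = [a] := by
      apply List.ext_getElem (by simp [hxlen]; omega)
      intro t h1 h2
      simp only [List.length_drop, hxlen] at h1
      have ht0 : t = 0 := by omega
      subst ht0
      rw [List.getElem_drop, ha]
      exact gic (by omega)
    exact hCBF u (Set.mem_union_left _ huS) x (Set.mem_union_right _ rfl) [a]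
      (by simp) (by simp [hulen]; omega) (by simp [hxlen]; omega)
      ⟨⟨_, rfl⟩, hdrop ▸ List.drop_suffix (n-1) x⟩
  · -- Case B : last symbol in J
    have hbJ : x[n-1]'(by omega) ∈ J := memJ hIJ hA
    by_cases hfirst : ∀ t (h : t < x.length), t < k → x[t] ∈ I
    · -- Case B2 : first k symbols all in I
      rcases hk with hk | hk
      · -- k = n-1 : then x ∈ S, contradiction
        apply hxS
        refine ⟨hxlen, ?_, ?_, ?_, ?_⟩
        · intro z hz
          obtain ⟨t, ht, rfl⟩ := List.mem_iff_getElem.1 hz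
          rw [List.getElem_take]
          exact hfirst t (by simp at ht; omega) (by simp at ht; omega)
        · exact ⟨x[k]'(by omega), by rw [gic (show k = n-1 by omega)]; exact hbJ,
            List.getElem?_eq_getElem _⟩
        · exact ⟨x[n-1]'(by omega), hbJ, List.getElem?_eq_getElem _⟩
        · rintro ⟨y, hinf, hylen, -⟩
          have := hinf.length_le
          simp [List.length_take, List.length_drop, hxlen] at this
          omega
      · -- 2k < n
        -- there is an internal run of k consecutive I symbols
        have hrunex : ∃ p, (1 ≤ p ∧ p + k ≤ n ∧
            ∀ t, t < k → ∀ (h : p + t < x.length), x[p+t] ∈ I) ∧ p ≤ n - k - 1 := by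
          by_cases hxk : x[k]'(by omega) ∈ I
          · refine ⟨1, ⟨le_refl _, by omega, fun t ht h => ?_⟩, by omega⟩
            rcases eq_or_lt_of_le (show t + 1 ≤ k by omega) with he | hlt
            · rw [gic (show 1 + t = k by omega)]; exact hxk
            · exact hfirst (1+t) h (by omega)
          · -- middle of x is not IkFree
            have hxkJ : x[k]'(by omega) ∈ J := memJ hIJ hxk
            have hik : ¬ IkFree I k ((x.drop (k+1)).take (n - k - 2)) := by
              intro hik
              apply hxS
              refine ⟨hxlen, ?_, ⟨x[k]'(by omega), hxkJ, List.getElem?_eq_getElem _⟩,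
                ⟨x[n-1]'(by omega), hbJ, List.getElem?_eq_getElem _⟩, hik⟩
              intro z hz
              obtain ⟨t, ht, rfl⟩ := List.mem_iff_getElem.1 hz
              rw [List.getElem_take]
              exact hfirst t (by simp at ht; omega) (by simp at ht; omega)
            rw [IkFree, not_not] at hik
            obtain ⟨y, ⟨s, t, hst⟩, hylen, hymem⟩ := hik
            have hslen : s.length + k ≤ n - k - 2 := by
              have : (s ++ y ++ t).length = (((x.drop (k+1)).take (n-k-2))).length := by
                rw [hst]
              simp [List.length_take, List.length_drop, hxlen] at this
              simp [this]; omega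
            refine ⟨k + 1 + s.length, ⟨by omega, by omega, fun t' ht' h => ?_⟩, by omega⟩
            have he : x[k+1+s.length+t']'h = y[t']'(by omega) := by
              have h1 : ((x.drop (k+1)).take (n-k-2))[s.length + t']'(by
                  simp [List.length_take, List.length_drop, hxlen]; omega) = y[t']'(by omega) := by
                rw [glc hst.symm, List.getElem_append_left (by simp; omega),
                  List.getElem_append_right (by omega)]
                exact gic (by omega)
              rw [List.getElem_take, List.getElem_drop] at h1
              rw [← h1]
              exact gic (by omega)
            rw [he]
            exact hymem _ (List.getElem_mem _)
        obtain ⟨p0, hP0, hp0le⟩ := hrunex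
        set P : ℕ → Prop := fun p => 1 ≤ p ∧ p + k ≤ n ∧
            ∀ t, t < k → ∀ (h : p + t < x.length), x[p+t] ∈ I with hP
        set s : ℕ := Nat.findGreatest P (n - k - 1) with hsdef
        have hsP : P s := Nat.findGreatest_spec hp0le hP0
        have hs1 : 1 ≤ s := le_trans hP0.1 (Nat.le_findGreatest hp0le hP0)
        have hsle : s ≤ n - k - 1 := Nat.findGreatest_le _
        have hmax : ∀ p', s < p' → p' ≤ n - k - 1 → ¬ P p' :=
          fun p' h1 h2 => Nat.findGreatest_is_greatest h1 h2
        -- x[s+k] ∈ J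
        have hskJ : x[s+k]'(by omega) ∈ J := by
          by_contra hcon
          have hxI : x[s+k]'(by omega) ∈ I := memI hIJ hcon
          have hP1 : P (s+1) := by
            refine ⟨by omega, by omega, fun t ht h => ?_⟩
            rcases eq_or_lt_of_le (show t + 1 ≤ k by omega) with he | hlt
            · rw [gic (show s+1+t = s+k by omega)]; exact hxI
            · rw [gic (show s+1+t = s+(t+1) by omega)]
              exact hsP.2.2 (t+1) (by omega) (by omega)
          rcases le_or_gt (s+1) (n-k-1) with hle | hgt
          · exact hmax (s+1) (by omega) hle hP1
          · have : x[(s+1)+(k-1)]'(by omega) ∈ I := hP1.2.2 (k-1) (by omega) (by omega)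
            rw [gic (show (s+1)+(k-1) = n-1 by omega)] at this
            exact notboth hd this hbJ
        -- the word u = x.drop s ++ j^s
        set u : List (Fin q) := x.drop s ++ replicate s j with hu
        have hulen : u.length = n := by simp [hu, hxlen]; omega
        have huA : ∀ p (h : p < n - s), u[p]'(by omega) = x[s+p]'(by omega) := by
          intro p h
          simp only [hu]
          rw [List.getElem_append_left (by simp [hxlen]; omega), List.getElem_drop]
        have huB : ∀ p (h1 : n - s ≤ p) (h2 : p < n), u[p]'(by omega) = j := by
          intro p h1 h2
          simp only [hu]
          rw [List.getElem_append_right (by simp [hxlen]; omega), List.getElem_replicate]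
        have huS : u ∈ Sijk I J k n := by
          apply mem_Sijk hd hk1 hk2 hn hulen
          · intro t h htk
            rw [hulen] at h
            rw [huA t (by omega)]
            exact hsP.2.2 t htk (by omega)
          · intro h
            rw [huA k (by omega)]
            exact hskJ
          · intro h
            rw [huB (n-1) (by omega) (by omega)]
            exact hj
          · intro b hb
            by_cases hcase : k + 1 + b + k ≤ n - s
            · -- window entirely inside the x part
              by_cases hex2 : ∃ t, t < k ∧ ∀ (h : s+k+1+b+t < x.length), x[s+k+1+b+t] ∈ J
              · obtain ⟨t, ht, hJ2⟩ := hex2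
                refine ⟨t, ht, fun h => ?_⟩
                rw [huA (k+1+(b+t)) (by omega), gic (show s+(k+1+(b+t)) = s+k+1+b+t by omega)]
                exact hJ2 (by omega)
              · exfalso
                push_neg at hex2
                have hPp : P (s+k+1+b) := by
                  refine ⟨by omega, by omega, fun t ht h => ?_⟩
                  apply memI hIJ
                  intro hJ3
                  obtain ⟨h4, h5⟩ := hex2 t ht
                  exact h5 hJ3
                rcases le_or_gt (s+k+1+b) (n-k-1) with hle | hgt
                · exact hmax _ (by omega) hle hPp
                · have h6 : x[(s+k+1+b)+(k-1)]'(by omega) ∈ I :=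
                    hPp.2.2 (k-1) (by omega) (by omega)
                  rw [gic (show (s+k+1+b)+(k-1) = n-1 by omega)] at h6
                  exact notboth hd h6 hbJ
            · -- window hits the j part
              refine ⟨n - s - (k+1+b), by omega, fun h => ?_⟩
              rw [huB (k+1+(b+(n-s-(k+1+b)))) (by omega) (by omega)]
              exact hj
        refine hCBF u (Set.mem_union_left _ huS) x (Set.mem_union_right _ rfl) (x.drop s)
          (by rw [← List.length_pos_iff, List.length_drop, hxlen]; omega)
          (by rw [List.length_drop, hxlen, hulen]; omega)
          (by rw [List.length_drop, hxlen]; omega)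
          ⟨⟨_, rfl⟩, List.drop_suffix s x⟩
    · -- Case B1 : some symbol among the first k is in J
      push_neg at hfirst
      obtain ⟨t0, hb0, ht0k, ht0I⟩ := hfirst
      have hexm : ∃ r, ∃ (h : r < x.length), x[r] ∈ J := ⟨t0, hb0, memJ hIJ ht0I⟩
      set m := Nat.find hexm with hm
      obtain ⟨hmb, hmJ⟩ := Nat.find_spec hexm
      have hmk : m < k := lt_of_le_of_lt (Nat.find_min' hexm ⟨hb0, memJ hIJ ht0I⟩) ht0k
      have hmin : ∀ r, r < m → ∀ (h : r < x.length), x[r] ∈ I :=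
        fun r hr h => memI hIJ (fun hJ' => Nat.find_min hexm hr ⟨h, hJ'⟩)
      have hwlen : (x.take (m+1)).length = m + 1 := by simp [hxlen]; omega
      rcases hk with hk | hk
      · -- k = n - 1
        set v : List (Fin q) := replicate (n-(m+1)) i ++ x.take (m+1) with hv
        have hvlen : v.length = n := by simp [hv, hxlen]; omega
        have hvA : ∀ p (h : p < n - (m+1)), v[p]'(by omega) = i := by
          intro p h
          simp only [hv]
          rw [List.getElem_append_left (by simp; omega), List.getElem_replicate]
        have hvB : ∀ p (h1 : n - (m+1) ≤ p) (h2 : p < n),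
            v[p]'(by omega) = x[p - (n-(m+1))]'(by omega) := by
          intro p h1 h2
          simp only [hv]
          rw [List.getElem_append_right (by simp; omega), List.getElem_take]
          congr 1
          simp
        have hvS : v ∈ Sijk I J k n := by
          apply mem_Sijk hd hk1 hk2 hn hvlen
          · intro t h htk
            rw [hvlen] at h
            by_cases hc : t < n - (m+1)
            · rw [hvA t hc]; exact hi
            · rw [hvB t (by omega) (by omega)]
              exact hmin _ (by omega) _
          · intro h
            rw [gic (show k = n-1 by omega), hvB (n-1) (by omega) (by omega),
              gic (show n-1-(n-(m+1)) = m by omega)]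
            exact hmJ
          · intro h
            rw [hvB (n-1) (by omega) (by omega), gic (show n-1-(n-(m+1)) = m by omega)]
            exact hmJ
          · intro b hb
            exfalso
            omega
        exact hCBF x (Set.mem_union_right _ rfl) v (Set.mem_union_left _ hvS) (x.take (m+1))
          (by rw [← List.length_pos_iff, hwlen]; omega)
          (by rw [hwlen, hxlen]; omega) (by rw [hwlen, hvlen]; omega)
          ⟨List.take_prefix _ _, ⟨_, rfl⟩⟩
      · -- 2k < n
        set v : List (Fin q) := (replicate k i ++ replicate (n-k-1-m) j) ++ x.take (m+1) with hv
        have hleft : (replicate k i ++ replicate (n-k-1-m) j).length = n - (m+1) := by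
          simp; omega
        have hvlen : v.length = n := by simp [hv, hxlen]; omega
        have hvA : ∀ p (h : p < k), v[p]'(by omega) = i := by
          intro p h
          simp only [hv]
          rw [List.getElem_append_left (by rw [hleft]; omega),
            List.getElem_append_left (by simp; omega), List.getElem_replicate]
        have hvB : ∀ p (h1 : k ≤ p) (h2 : p < n - (m+1)), v[p]'(by omega) = j := by
          intro p h1 h2
          simp only [hv]
          rw [List.getElem_append_left (by rw [hleft]; omega),
            List.getElem_append_right (by simp; omega), List.getElem_replicate]
        have hvC : ∀ p (h1 : n - (m+1) ≤ p) (h2 : p < n),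
            v[p]'(by omega) = x[p - (n-(m+1))]'(by omega) := by
          intro p h1 h2
          simp only [hv]
          rw [List.getElem_append_right (by rw [hleft]; omega), List.getElem_take]
          congr 1
          rw [hleft]
        have hvS : v ∈ Sijk I J k n := by
          apply mem_Sijk hd hk1 hk2 hn hvlen
          · intro t h htk
            rw [hvA t htk]; exact hi
          · intro h
            rw [hvB k (le_refl _) (by omega)]
            exact hj
          · intro h
            rw [hvC (n-1) (by omega) (by omega), gic (show n-1-(n-(m+1)) = m by omega)]
            exact hmJ
          · intro b hb
            refine ⟨0, by omega, fun h => ?_⟩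
            rw [hvB (k+1+(b+0)) (by omega) (by omega)]
            exact hj
        exact hCBF x (Set.mem_union_right _ rfl) v (Set.mem_union_left _ hvS) (x.take (m+1))
          (by rw [← List.length_pos_iff, hwlen]; omega)
          (by rw [hwlen, hxlen]; omega) (by rw [hwlen, hvlen]; omega)
          ⟨List.take_prefix _ _, ⟨_, rfl⟩⟩

lemma cbf_union (hd : I ∩ J = ∅) (hk1 : 1 ≤ k) {x : List (Fin q)} (hxlen : x.length = n)
    (hPX : ∀ u, u ∈ Sijk I J k n → ∀ w : List (Fin q), w ≠ [] → w.length < n →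
      w <+: u → w <:+ x → False)
    (hXS : ∀ v, v ∈ Sijk I J k n → ∀ w : List (Fin q), w ≠ [] → w.length < n →
      w <+: x → w <:+ v → False)
    (hXX : ∀ w : List (Fin q), w ≠ [] → w.length < n → w <+: x → w <:+ x → False) :
    IsCBF (Sijk I J k n ∪ {x}) := by
  rintro u hu v hv w hne hwu hwv ⟨hp, hs⟩
  rcases hu with hu | hu <;> rcases hv with hv | hv
  · exact S_CBF hd hk1 u hu v hv w hne hwu hwv ⟨hp, hs⟩
  · rw [Set.mem_singleton_iff] at hv; subst hv
    exact hPX u hu w hne (by rw [← hxlen]; exact hwv) hp hs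
  · rw [Set.mem_singleton_iff] at hu; subst hu
    exact hXS v hv w hne (by rw [← hxlen]; exact hwu) hp hs
  · rw [Set.mem_singleton_iff] at hu; subst hu
    rw [Set.mem_singleton_iff] at hv; subst hv
    exact hXX w hne (by rw [← hxlen]; exact hwu) hp hs

lemma witness1 (hn : 5 ≤ n) (hk1 : 1 ≤ k) (hk2 : k ≤ n - 2) (hkk : n < 2 * k)
    (hIJ : I ∪ J = Set.univ) (hd : I ∩ J = ∅) {i j : Fin q} (hi : i ∈ I) (hj : j ∈ J) :
    ∃ x : List (Fin q), x.length = n ∧ x ∉ Sijk I J k n ∧ IsCBF (Sijk I J k n ∪ {x}) := by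
  have hkn : 2 ≤ k := by omega
  set m := n - k - 1 with hm
  have hm1 : 1 ≤ m := by omega
  have hm2 : m ≤ k - 2 := by omega
  set x : List (Fin q) :=
    List.ofFn (fun t : Fin n => if t.1 = m ∨ t.1 = n-2 ∨ t.1 = n-1 then j else i) with hx
  have hxlen : x.length = n := by simp [hx]
  have hxg : ∀ t (h : t < x.length),
      x[t] = if t = m ∨ t = n-2 ∨ t = n-1 then j else i := by
    intro t h
    simp [hx, List.getElem_ofFn]
  refine ⟨x, hxlen, ?_, ?_⟩
  · intro hS
    have h1 : x[m]'(by omega) ∈ I := S_first hS (by omega) (by omega)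
    rw [hxg m (by omega), if_pos (by omega)] at h1
    exact notboth hd h1 hj
  · apply cbf_union hd hk1 hxlen
    · -- w prefix of codeword, suffix of x
      intro u hu w hne hwn hp hs
      have hℓ : 1 ≤ w.length := List.length_pos_iff.2 hne
      have hun := S_len hu
      rcases le_or_gt w.length k with hc | hc
      · have e1 : w[w.length - 1]'(by omega) = j := by
          rw [suffix_getElem hs (by omega)
            (show x.length - w.length + (w.length - 1) = n - 1 by omega) (by omega),
            hxg (n-1) (by omega), if_pos (by omega)]
        have e2 : w[w.length - 1]'(by omega) ∈ I := by
          rw [hp.getElem (by omega)]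
          exact S_first hu (by omega) (by omega)
        rw [e1] at e2
        exact notboth hd e2 hj
      · have e1 : w[w.length - k - 1]'(by omega) = j := by
          rw [suffix_getElem hs (by omega)
            (show x.length - w.length + (w.length - k - 1) = m by omega) (by omega),
            hxg m (by omega), if_pos (by omega)]
        have e2 : w[w.length - k - 1]'(by omega) ∈ I := by
          rw [hp.getElem (by omega)]
          exact S_first hu (by omega) (by omega)
        rw [e1] at e2
        exact notboth hd e2 hj
    · -- w prefix of x, suffix of codeword
      intro v hv w hne hwn hp hs
      have hℓ : 1 ≤ w.length := List.length_pos_iff.2 hne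
      have hvn := S_len hv
      have e1 : x[w.length - 1]'(by omega) ∈ J := by
        rw [← hp.getElem (by omega)]
        rw [suffix_getElem hs (by omega)
          (show v.length - w.length + (w.length - 1) = n - 1 by omega) (by omega)]
        exact S_last hv (by omega)
      have hor : w.length - 1 = m ∨ w.length - 1 = n-2 := by
        by_contra hcon
        push_neg at hcon
        rw [hxg (w.length - 1) (by omega), if_neg (by omega)] at e1
        exact notboth hd hi e1
      rcases hor with hor | hor
      · -- w.length = m + 1 = n - k
        have e2 : w[0]'(by omega) = i := by
          rw [hp.getElem (by omega), hxg 0 (by omega), if_neg (by omega)]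
        have e3 : w[0]'(by omega) ∈ J := by
          rw [suffix_getElem hs (by omega)
            (show v.length - w.length + 0 = k by omega) (by omega)]
          exact S_k hv (by omega)
        rw [e2] at e3
        exact notboth hd hi e3
      · -- w.length = n - 1
        have e2 : w[k-1]'(by omega) = i := by
          rw [hp.getElem (by omega), hxg (k-1) (by omega), if_neg (by omega)]
        have e3 : w[k-1]'(by omega) ∈ J := by
          rw [suffix_getElem hs (by omega)
            (show v.length - w.length + (k-1) = k by omega) (by omega)]
          exact S_k hv (by omega)
        rw [e2] at e3
        exact notboth hd hi e3
    · -- w bifix of x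
      intro w hne hwn hp hs
      have hℓ : 1 ≤ w.length := List.length_pos_iff.2 hne
      have heq : ∀ t (ht : t < w.length), x[t]'(by omega) = x[x.length - w.length + t]'(by
          rw [hxlen]; rw [hxlen] at *; omega) := by
        intro t ht
        rw [← hp.getElem ht]
        exact suffix_getElem hs ht rfl (by rw [hxlen] at *; omega)
      have e1 : x[w.length - 1]'(by omega) ∈ J := by
        rw [heq (w.length - 1) (by omega), gic (show x.length - w.length + (w.length - 1)
          = n - 1 by omega), hxg (n-1) (by omega), if_pos (by omega)]
        exact hj
      have hor : w.length - 1 = m ∨ w.length - 1 = n-2 := by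
        by_contra hcon
        push_neg at hcon
        rw [hxg (w.length - 1) (by omega), if_neg (by omega)] at e1
        exact notboth hd hi e1
      have e2 := heq (m-1) (by omega)
      rw [hxg (m-1) (by omega), if_neg (by omega)] at e2
      rcases hor with hor | hor
      · rw [gic (show x.length - w.length + (m-1) = n-2 by omega),
          hxg (n-2) (by omega), if_pos (by omega)] at e2
        exact notboth hd (e2 ▸ hi) hj
      · rw [gic (show x.length - w.length + (m-1) = m by omega),
          hxg m (by omega), if_pos (by omega)] at e2
        exact notboth hd (e2 ▸ hi) hj

lemma witness2 (hn : 5 ≤ n) (hk1 : 1 ≤ k) (hkk : n = 2 * k)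
    (hIJ : I ∪ J = Set.univ) (hd : I ∩ J = ∅) {i j : Fin q} (hi : i ∈ I) (hj : j ∈ J) :
    ∃ x : List (Fin q), x.length = n ∧ x ∉ Sijk I J k n ∧ IsCBF (Sijk I J k n ∪ {x}) := by
  have hkn : 3 ≤ k := by omega
  set x : List (Fin q) :=
    List.ofFn (fun t : Fin n => if t.1 < k-1 ∨ t.1 = n-2 then i else j) with hx
  have hxlen : x.length = n := by simp [hx]
  have hxg : ∀ t (h : t < x.length),
      x[t] = if t < k-1 ∨ t = n-2 then i else j := by
    intro t h
    simp [hx, List.getElem_ofFn]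
  refine ⟨x, hxlen, ?_, ?_⟩
  · intro hS
    have h1 : x[k-1]'(by omega) ∈ I := S_first hS (by omega) (by omega)
    rw [hxg (k-1) (by omega), if_neg (by omega)] at h1
    exact notboth hd h1 hj
  · apply cbf_union hd hk1 hxlen
    · intro u hu w hne hwn hp hs
      have hℓ : 1 ≤ w.length := List.length_pos_iff.2 hne
      have hun := S_len hu
      rcases le_or_gt w.length k with hc | hc
      · have e1 : w[w.length - 1]'(by omega) = j := by
          rw [suffix_getElem hs (by omega)
            (show x.length - w.length + (w.length - 1) = n - 1 by omega) (by omega),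
            hxg (n-1) (by omega), if_neg (by omega)]
        have e2 : w[w.length - 1]'(by omega) ∈ I := by
          rw [hp.getElem (by omega)]
          exact S_first hu (by omega) (by omega)
        rw [e1] at e2
        exact notboth hd e2 hj
      · have e1 : w[w.length - k - 1]'(by omega) = j := by
          rw [suffix_getElem hs (by omega)
            (show x.length - w.length + (w.length - k - 1) = k - 1 by omega) (by omega),
            hxg (k-1) (by omega), if_neg (by omega)]
        have e2 : w[w.length - k - 1]'(by omega) ∈ I := by
          rw [hp.getElem (by omega)]
          exact S_first hu (by omega) (by omega)
        rw [e1] at e2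
        exact notboth hd e2 hj
    · intro v hv w hne hwn hp hs
      have hℓ : 1 ≤ w.length := List.length_pos_iff.2 hne
      have hvn := S_len hv
      have e1 : x[w.length - 1]'(by omega) ∈ J := by
        rw [← hp.getElem (by omega)]
        rw [suffix_getElem hs (by omega)
          (show v.length - w.length + (w.length - 1) = n - 1 by omega) (by omega)]
        exact S_last hv (by omega)
      have hor : k ≤ w.length ∧ w.length ≠ n - 1 := by
        by_contra hcon
        rw [hxg (w.length - 1) (by omega), if_pos (by omega)] at e1
        exact notboth hd hi e1
      have e2 : w[w.length - k]'(by omega) = i := by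
        rw [hp.getElem (by omega), hxg (w.length - k) (by omega), if_pos (by omega)]
      have e3 : w[w.length - k]'(by omega) ∈ J := by
        rw [suffix_getElem hs (by omega)
          (show v.length - w.length + (w.length - k) = k by omega) (by omega)]
        exact S_k hv (by omega)
      rw [e2] at e3
      exact notboth hd hi e3
    · intro w hne hwn hp hs
      have hℓ : 1 ≤ w.length := List.length_pos_iff.2 hne
      have heq : ∀ t (ht : t < w.length), x[t]'(by omega) = x[x.length - w.length + t]'(by
          rw [hxlen]; rw [hxlen] at *; omega) := by
        intro t ht
        rw [← hp.getElem ht]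
        exact suffix_getElem hs ht rfl (by rw [hxlen] at *; omega)
      have e1 : x[w.length - 1]'(by omega) ∈ J := by
        rw [heq (w.length - 1) (by omega), gic (show x.length - w.length + (w.length - 1)
          = n - 1 by omega), hxg (n-1) (by omega), if_neg (by omega)]
        exact hj
      have hor : k ≤ w.length ∧ w.length ≠ n - 1 := by
        by_contra hcon
        rw [hxg (w.length - 1) (by omega), if_pos (by omega)] at e1
        exact notboth hd hi e1
      rcases eq_or_lt_of_le hor.1 with hc | hc
      · -- w.length = k
        have e2 := heq 0 (by omega)
        rw [hxg 0 (by omega), if_pos (by omega),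
          gic (show x.length - w.length + 0 = k by omega),
          hxg k (by omega), if_neg (by omega)] at e2
        exact notboth hd (e2 ▸ hi) hj
      · -- w.length ≥ k + 1
        have e2 := heq (w.length - 2) (by omega)
        rw [hxg (w.length - 2) (by omega), if_neg (by omega),
          gic (show x.length - w.length + (w.length - 2) = n - 2 by omega),
          hxg (n-2) (by omega), if_pos (by omega)] at e2
        exact notboth hd (e2.symm ▸ hi) hj

end helpers

theorem stmt5 (q n k : ℕ) (hn : 5 ≤ n) (hq : 1 < q) (hk1 : 1 ≤ k) (hk2 : k ≤ n - 1)
    (I J : Set (Fin q)) (hIJ : I ∪ J = Set.univ) (hd : I ∩ J = ∅)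
    (hI : I.Nonempty) (hJ : J.Nonempty) :
    (∀ x : List (Fin q), x.length = n → x ∉ Sijk I J k n →
        ¬ IsCBF (Sijk I J k n ∪ {x})) ↔ (k = n - 1 ∨ (1 ≤ k ∧ 2 * k < n)) := by
  constructor
  · intro hL
    by_contra hR
    obtain ⟨i, hi⟩ := hI
    obtain ⟨j, hj⟩ := hJ
    have hk2' : k ≤ n - 2 := by omega
    rcases lt_or_ge n (2*k) with hc | hc
    · obtain ⟨x, hxlen, hxS, hcbf⟩ := witness1 hn hk1 hk2' hc hIJ hd hi hj
      exact hL x hxlen hxS hcbf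
    · have hc2 : n = 2*k := by omega
      obtain ⟨x, hxlen, hxS, hcbf⟩ := witness2 hn hk1 hc2 hIJ hd hi hj
      exact hL x hxlen hxS hcbf
  · intro hR x hxlen hxS
    apply nonexp hn hk1 hk2 hIJ hd hI hJ ?_ x hxlen hxS
    rcases hR with h | h
    · exact Or.inl h
    · exact Or.inr h.2
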